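/- Let V be a random variable with smooth density f on (0,∞) satisfying log f(v) ∼ −l₁ v^{l₂} as v → ∞, with l₁ > 0 and l₂ > 1. Then log E[e^{zV}] ∼ (l₂−1)·l₁·( z/(l₁ l₂) )^{l₂/(l₂−1)} as z → ∞; in particular log E[e^{zV}] is regularly varying in z with index l₂/(l₂−1). -/

import Mathlib

open MeasureTheory Filter Set

lemma stmt8_young {l₁ l₂ : ℝ} (hl₁ : 0 < l₁) (hl₂ : 1 < l₂) {z v : ℝ} (hz : 0 ≤ z) (hv : 0 ≤ v) :
    z * v ≤ l₁ * v ^ l₂ + (l₂ - 1) * l₁ * (z / (l₁ * l₂)) ^ (l₂ / (l₂ - 1)) := by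
  have hl₂0 : (0:ℝ) < l₂ := lt_trans one_pos hl₂
  have hs : (0:ℝ) < l₂ - 1 := by linarith
  have hA : (0:ℝ) < l₁ * l₂ := mul_pos hl₁ hl₂0
  have hpq : l₂.HolderConjugate (l₂ / (l₂ - 1)) :=
    (Real.holderConjugate_iff_eq_conjExponent hl₂).2 rfl
  set c : ℝ := (l₁ * l₂) ^ (1 / l₂) with hcdef
  have hc : 0 < c := Real.rpow_pos_of_pos hA _
  set B : ℝ := (l₁ * l₂) ^ (1 / (l₂ - 1)) with hBdef
  have hB : 0 < B := Real.rpow_pos_of_pos hA _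
  have key := Real.young_inequality_of_nonneg (mul_nonneg hc.le hv) (div_nonneg hz hc.le) hpq
  have hcl : c ^ l₂ = l₁ * l₂ := by
    rw [hcdef, ← Real.rpow_mul hA.le, one_div_mul_cancel hl₂0.ne', Real.rpow_one]
  have hcq : c ^ (l₂ / (l₂ - 1)) = B := by
    rw [hcdef, hBdef, ← Real.rpow_mul hA.le]
    congr 1
    field_simp
  have hAq : (l₁ * l₂) ^ (l₂ / (l₂ - 1)) = (l₁ * l₂) * B := by
    rw [show l₂ / (l₂ - 1) = 1 + 1 / (l₂ - 1) by field_simp; ring, Real.rpow_add hA, Real.rpow_one, hBdef]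
  have e1 : (c * v) * (z / c) = z * v := by field_simp
  have e2 : (c * v) ^ l₂ = (l₁ * l₂) * v ^ l₂ := by rw [Real.mul_rpow hc.le hv, hcl]
  have e3 : (z / c) ^ (l₂ / (l₂ - 1)) = z ^ (l₂ / (l₂ - 1)) / B := by
    rw [Real.div_rpow hz hc.le, hcq]
  have e4 : (z / (l₁ * l₂)) ^ (l₂ / (l₂ - 1)) = z ^ (l₂ / (l₂ - 1)) / ((l₁ * l₂) * B) := by
    rw [Real.div_rpow hz hA.le, hAq]
  rw [e1, e2, e3] at key
  rw [e4]
  have e5 : (l₁ * l₂) * v ^ l₂ / l₂ + (z ^ (l₂ / (l₂ - 1)) / B) / (l₂ / (l₂ - 1))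
      = l₁ * v ^ l₂ + (l₂ - 1) * l₁ * (z ^ (l₂ / (l₂ - 1)) / ((l₁ * l₂) * B)) := by
    field_simp
  rw [e5] at key
  exact key



lemma stmt8_coeff {l₁ l₂ : ℝ} (hl₁ : 0 < l₁) (hl₂ : 1 < l₂) {t : ℝ} (ht : 0 < t) :
    (l₂ - 1) * (t * l₁) / ((t * l₁) * l₂) ^ (l₂ / (l₂ - 1))
      / ((l₂ - 1) * l₁ / (l₁ * l₂) ^ (l₂ / (l₂ - 1))) = t ^ (1 - l₂ / (l₂ - 1)) := by
  have hl₂0 : (0:ℝ) < l₂ := lt_trans one_pos hl₂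
  have hs : (0:ℝ) < l₂ - 1 := by linarith
  have hA : (0:ℝ) < l₁ * l₂ := mul_pos hl₁ hl₂0
  have h1 : ((t * l₁) * l₂) ^ (l₂ / (l₂ - 1)) = t ^ (l₂ / (l₂ - 1)) * (l₁ * l₂) ^ (l₂ / (l₂ - 1)) := by
    rw [mul_assoc, Real.mul_rpow ht.le hA.le]
  rw [h1, Real.rpow_sub ht, Real.rpow_one]
  have htq : (0:ℝ) < t ^ (l₂ / (l₂ - 1)) := Real.rpow_pos_of_pos ht _
  have hAq : (0:ℝ) < (l₁ * l₂) ^ (l₂ / (l₂ - 1)) := Real.rpow_pos_of_pos hA _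
  field_simp

lemma stmt8_upper_limit {l₁ l₂ : ℝ} (hl₁ : 0 < l₁) (hl₂ : 1 < l₂) {t : ℝ} (ht : 0 < t)
    (c₀ V₀ : ℝ) :
    Tendsto (fun z : ℝ =>
        (c₀ + z * V₀ + (l₂ - 1) * (t * l₁) * ((z + 1) / ((t * l₁) * l₂)) ^ (l₂ / (l₂ - 1)))
          / ((l₂ - 1) * l₁ * (z / (l₁ * l₂)) ^ (l₂ / (l₂ - 1)))) atTop
      (nhds (t ^ (1 - l₂ / (l₂ - 1)))) := by
  have hl₂0 : (0:ℝ) < l₂ := lt_trans one_pos hl₂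
  have hs : (0:ℝ) < l₂ - 1 := by linarith
  have hA : (0:ℝ) < l₁ * l₂ := mul_pos hl₁ hl₂0
  set q : ℝ := l₂ / (l₂ - 1) with hqdef
  have hq0 : (0:ℝ) < q := div_pos hl₂0 hs
  have hq1 : (1:ℝ) < q := (one_lt_div hs).2 (by linarith)
  set C₁ : ℝ := (l₂ - 1) * l₁ / (l₁ * l₂) ^ q with hC₁def
  set Ct : ℝ := (l₂ - 1) * (t * l₁) / ((t * l₁) * l₂) ^ q with hCtdef
  have hC₁ : 0 < C₁ := div_pos (mul_pos hs hl₁) (Real.rpow_pos_of_pos hA _)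
  have hCt : 0 < Ct := div_pos (mul_pos hs (mul_pos ht hl₁)) (Real.rpow_pos_of_pos (mul_pos (mul_pos ht hl₁) hl₂0) _)
  -- target value
  have hval : Ct / C₁ = t ^ (1 - q) := stmt8_coeff hl₁ hl₂ ht
  -- the model function
  have hlim : Tendsto (fun z : ℝ =>
      (c₀ / C₁) * z ^ (-q) + (V₀ / C₁) * z ^ (-(q - 1)) + (Ct / C₁) * ((z + 1) / z) ^ q)
      atTop (nhds (t ^ (1 - q))) := by
    have t1 : Tendsto (fun z : ℝ => (c₀ / C₁) * z ^ (-q)) atTop (nhds 0) := by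
      simpa using (tendsto_rpow_neg_atTop hq0).const_mul (c₀ / C₁)
    have t2 : Tendsto (fun z : ℝ => (V₀ / C₁) * z ^ (-(q - 1))) atTop (nhds 0) := by
      simpa using (tendsto_rpow_neg_atTop (by linarith : (0:ℝ) < q - 1)).const_mul (V₀ / C₁)
    have t3 : Tendsto (fun z : ℝ => ((z + 1) / z) ^ q) atTop (nhds 1) := by
      have hb : Tendsto (fun z : ℝ => (z + 1) / z) atTop (nhds 1) := by
        have : Tendsto (fun z : ℝ => 1 + z⁻¹) atTop (nhds (1 + 0)) :=
          tendsto_const_nhds.add tendsto_inv_atTop_zero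
        rw [add_zero] at this
        apply this.congr'
        filter_upwards [eventually_gt_atTop (0:ℝ)] with z hz
        field_simp
      have hc : ContinuousAt (fun x : ℝ => x ^ q) 1 :=
        Real.continuousAt_rpow_const 1 q (Or.inl one_ne_zero)
      have := hc.tendsto.comp hb
      simpa [Real.one_rpow, Function.comp_def] using this
    have t4 : Tendsto (fun z : ℝ => (Ct / C₁) * ((z + 1) / z) ^ q) atTop (nhds (Ct / C₁)) := by
      simpa using t3.const_mul (Ct / C₁)
    have h := (t1.add t2).add t4
    rw [add_zero, zero_add] at h
    rw [← hval]
    exact h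
  apply hlim.congr'
  filter_upwards [eventually_gt_atTop (0:ℝ)] with z hz
  have hzq : (0:ℝ) < z ^ q := Real.rpow_pos_of_pos hz _
  have hden : (l₂ - 1) * l₁ * (z / (l₁ * l₂)) ^ q = C₁ * z ^ q := by
    rw [Real.div_rpow hz.le hA.le, hC₁def]
    field_simp
  have hnum : (l₂ - 1) * (t * l₁) * ((z + 1) / ((t * l₁) * l₂)) ^ q = Ct * (z + 1) ^ q := by
    rw [Real.div_rpow (by linarith : (0:ℝ) ≤ z + 1) (mul_pos (mul_pos ht hl₁) hl₂0).le, hCtdef]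
    field_simp
  have h5 : ((z + 1) / z) ^ q = (z + 1) ^ q / z ^ q := Real.div_rpow (by linarith) hz.le q
  have h6 : z ^ (-q) = (z ^ q)⁻¹ := Real.rpow_neg hz.le q
  have h7 : z ^ (-(q - 1)) = z / z ^ q := by
    rw [show -(q - 1) = 1 - q by ring, Real.rpow_sub hz, Real.rpow_one]
  rw [hden, hnum, h5, h6, h7]
  field_simp

lemma stmt8_lower_limit {l₁ l₂ : ℝ} (hl₁ : 0 < l₁) (hl₂ : 1 < l₂) {t : ℝ} (ht : 0 < t) :
    Tendsto (fun z : ℝ =>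
        (z * (z / ((t * l₁) * l₂)) ^ (1 / (l₂ - 1))
          - (t * l₁) * ((z / ((t * l₁) * l₂)) ^ (1 / (l₂ - 1)) + 1) ^ l₂)
          / ((l₂ - 1) * l₁ * (z / (l₁ * l₂)) ^ (l₂ / (l₂ - 1)))) atTop
      (nhds (t ^ (1 - l₂ / (l₂ - 1)))) := by
  have hl₂0 : (0:ℝ) < l₂ := lt_trans one_pos hl₂
  have hs : (0:ℝ) < l₂ - 1 := by linarith
  have hA0 : (0:ℝ) < l₁ * l₂ := mul_pos hl₁ hl₂0
  set a : ℝ := t * l₁ with hadef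
  have ha : 0 < a := mul_pos ht hl₁
  set A : ℝ := a * l₂ with hAdef
  have hA : 0 < A := mul_pos ha hl₂0
  set q : ℝ := l₂ / (l₂ - 1) with hqdef
  set r : ℝ := 1 / (l₂ - 1) with hrdef
  have hq0 : (0:ℝ) < q := div_pos hl₂0 hs
  have hr0 : (0:ℝ) < r := div_pos one_pos hs
  have hrq : r * l₂ = q := by rw [hrdef, hqdef]; field_simp
  have h1q : 1 + r = q := by rw [hrdef, hqdef]; field_simp; ring
  set K : ℝ := A ^ (-r) with hKdef
  have hK : 0 < K := Real.rpow_pos_of_pos hA _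
  set C₁ : ℝ := (l₂ - 1) * l₁ / (l₁ * l₂) ^ q with hC₁def
  have hC₁ : 0 < C₁ := div_pos (mul_pos hs hl₁) (Real.rpow_pos_of_pos hA0 _)
  -- value identity : (K - a * K ^ l₂) / C₁ = t ^ (1 - q)
  have hKl : K ^ l₂ = A ^ (-q) := by
    rw [hKdef, ← Real.rpow_mul hA.le]
    congr 1
    rw [neg_mul, hrq]
  have hval : (K - a * K ^ l₂) / C₁ = t ^ (1 - q) := by
    have hnum : K - a * K ^ l₂ = (l₂ - 1) * a / A ^ q := by
      rw [hKl, hKdef, show -r = 1 - q by rw [hrdef, hqdef]; field_simp; ring,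
        Real.rpow_sub hA, Real.rpow_one, Real.rpow_neg hA.le]
      have hAq : (0:ℝ) < A ^ q := Real.rpow_pos_of_pos hA _
      field_simp
      rw [hAdef]
      ring
    rw [hnum, hC₁def, hadef, hAdef, hadef]
    exact stmt8_coeff hl₁ hl₂ ht
  -- model function
  have hmodel : Tendsto (fun z : ℝ => (K - a * (K + z ^ (-r)) ^ l₂) / C₁) atTop
      (nhds (t ^ (1 - q))) := by
    have hz0 : Tendsto (fun z : ℝ => z ^ (-r)) atTop (nhds 0) := tendsto_rpow_neg_atTop hr0
    have hc : ContinuousAt (fun u : ℝ => (K - a * (K + u) ^ l₂) / C₁) 0 := by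
      have h1 : ContinuousAt (fun u : ℝ => (K + u) ^ l₂) 0 := by
        apply ContinuousAt.rpow_const
        · exact continuousAt_const.add continuousAt_id
        · left; simpa using hK.ne'
      exact (continuousAt_const.sub (continuousAt_const.mul h1)).div continuousAt_const hC₁.ne'
    have := hc.tendsto.comp hz0
    simp only [Function.comp_def, add_zero] at this
    rw [← hval]
    simpa using this
  apply hmodel.congr'
  filter_upwards [eventually_gt_atTop (0:ℝ)] with z hz
  have hzq : (0:ℝ) < z ^ q := Real.rpow_pos_of_pos hz _
  have hzr : (0:ℝ) < z ^ r := Real.rpow_pos_of_pos hz _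
  have hvstar : (z / A) ^ r = z ^ r * K := by
    rw [div_eq_mul_inv, Real.mul_rpow hz.le (inv_nonneg.2 hA.le), hKdef,
      ← Real.rpow_neg_one A, ← Real.rpow_mul hA.le]
    norm_num
  have hzv : z * (z ^ r * K) = z ^ q * K := by
    rw [← mul_assoc]
    congr 1
    rw [← h1q, Real.rpow_add hz, Real.rpow_one]
  have hsplit : z ^ r * K + 1 = z ^ r * (K + z ^ (-r)) := by
    rw [mul_add, Real.rpow_neg hz.le, mul_inv_cancel₀ hzr.ne']
  have hpow : (z ^ r * K + 1) ^ l₂ = z ^ q * (K + z ^ (-r)) ^ l₂ := by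
    rw [hsplit, Real.mul_rpow hzr.le (by positivity), ← Real.rpow_mul hz.le, hrq]
  have hden : (l₂ - 1) * l₁ * (z / (l₁ * l₂)) ^ q = C₁ * z ^ q := by
    rw [Real.div_rpow hz.le hA0.le, hC₁def]
    field_simp
  rw [hvstar, hzv, hpow, hden]
  field_simp

lemma stmt8_integral_repr {μ : Measure ℝ}
    (hmgf : Integrable (fun v => Real.exp (z * v)) μ) :
    (∫ v, Real.exp (z * v) ∂μ) = (∫⁻ v, ENNReal.ofReal (Real.exp (z * v)) ∂μ).toReal ∧
      (∫⁻ v, ENNReal.ofReal (Real.exp (z * v)) ∂μ) ≠ ⊤ := by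
  constructor
  · exact integral_eq_lintegral_of_nonneg_ae (Filter.Eventually.of_forall fun v => (Real.exp_pos _).le)
      ((Real.continuous_exp.comp (continuous_const.mul continuous_id)).aestronglyMeasurable)
  · have h := hmgf.hasFiniteIntegral
    rw [hasFiniteIntegral_iff_norm] at h
    have : ∀ v : ℝ, ENNReal.ofReal (Real.exp (z * v)) = ENNReal.ofReal ‖Real.exp (z * v)‖ := by
      intro v; rw [Real.norm_eq_abs, abs_of_pos (Real.exp_pos _)]
    simp only [this]
    exact h.ne

lemma stmt8_M_upper {l₁ l₂ : ℝ} (hl₁ : 0 < l₁) (hl₂ : 1 < l₂)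
    {f : ℝ → ℝ} {μ : Measure ℝ} [IsProbabilityMeasure μ]
    (hdens : μ = volume.withDensity (fun v => ENNReal.ofReal (f v)))
    (hmgf : ∀ z : ℝ, Integrable (fun v => Real.exp (z * v)) μ)
    {t : ℝ} (ht : 0 < t) {V₀ : ℝ} (hV₀ : 1 ≤ V₀)
    (hub : ∀ v, V₀ ≤ v → f v ≤ Real.exp (-(t * l₁ * v ^ l₂)))
    {z : ℝ} (hz : 0 ≤ z) :
    (∫ v, Real.exp (z * v) ∂μ) ≤ Real.exp (z * V₀)
      + Real.exp ((l₂ - 1) * (t * l₁) * ((z + 1) / ((t * l₁) * l₂)) ^ (l₂ / (l₂ - 1))) := by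
  obtain ⟨hrepr, hfin⟩ := stmt8_integral_repr (z := z) (hmgf z)
  rw [hrepr]
  set S : ℝ := (l₂ - 1) * (t * l₁) * ((z + 1) / ((t * l₁) * l₂)) ^ (l₂ / (l₂ - 1)) with hSdef
  have hgm : Measurable fun v : ℝ => ENNReal.ofReal (Real.exp (z * v)) :=
    (Real.measurable_exp.comp (measurable_const.mul measurable_id)).ennreal_ofReal
  have hHm : Measurable fun v : ℝ => ENNReal.ofReal (Real.exp (-(t * l₁ * v ^ l₂))) := by
    fun_prop
  -- part 1 : Iic V₀
  have h1 : ∫⁻ v in Iic V₀, ENNReal.ofReal (Real.exp (z * v)) ∂μ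
      ≤ ENNReal.ofReal (Real.exp (z * V₀)) := by
    calc ∫⁻ v in Iic V₀, ENNReal.ofReal (Real.exp (z * v)) ∂μ
        ≤ ∫⁻ _ in Iic V₀, ENNReal.ofReal (Real.exp (z * V₀)) ∂μ := by
          refine lintegral_mono_ae ((ae_restrict_iff' measurableSet_Iic).2
            (Filter.Eventually.of_forall fun v hv => ENNReal.ofReal_le_ofReal ?_))
          exact Real.exp_le_exp.2 (mul_le_mul_of_nonneg_left hv hz)
      _ = ENNReal.ofReal (Real.exp (z * V₀)) * μ (Iic V₀) := setLIntegral_const _ _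
      _ ≤ ENNReal.ofReal (Real.exp (z * V₀)) * 1 := mul_le_mul_right prob_le_one _
      _ = ENNReal.ofReal (Real.exp (z * V₀)) := mul_one _
  -- part 2 : Ioi V₀
  have h2 : ∫⁻ v in Ioi V₀, ENNReal.ofReal (Real.exp (z * v)) ∂μ
      ≤ ENNReal.ofReal (Real.exp S) := by
    have hle : μ.restrict (Ioi V₀)
        ≤ (volume.restrict (Ioi V₀)).withDensity
            (fun v => ENNReal.ofReal (Real.exp (-(t * l₁ * v ^ l₂)))) := by
      rw [hdens, restrict_withDensity measurableSet_Ioi]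
      refine withDensity_mono ((ae_restrict_iff' measurableSet_Ioi).2
        (Filter.Eventually.of_forall fun v hv => ENNReal.ofReal_le_ofReal (hub v (le_of_lt hv))))
    have hexpint : ∫⁻ v in Ioi V₀, ENNReal.ofReal (Real.exp (-v)) ≤ 1 := by
      have hint : IntegrableOn (fun v : ℝ => Real.exp (-v)) (Ioi V₀) := by
        simpa using exp_neg_integrableOn_Ioi V₀ one_pos
      rw [← ofReal_integral_eq_lintegral_ofReal hint
        (Filter.Eventually.of_forall fun v => (Real.exp_pos _).le), integral_exp_neg_Ioi]
      exact ENNReal.ofReal_le_one.2 (Real.exp_le_one_iff.2 (by linarith))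
    calc ∫⁻ v in Ioi V₀, ENNReal.ofReal (Real.exp (z * v)) ∂μ
        ≤ ∫⁻ v, ENNReal.ofReal (Real.exp (z * v))
            ∂((volume.restrict (Ioi V₀)).withDensity
              (fun v => ENNReal.ofReal (Real.exp (-(t * l₁ * v ^ l₂))))) :=
          lintegral_mono' hle le_rfl
      _ = ∫⁻ v in Ioi V₀, (ENNReal.ofReal (Real.exp (-(t * l₁ * v ^ l₂)))
            * ENNReal.ofReal (Real.exp (z * v))) :=
          lintegral_withDensity_eq_lintegral_mul _ hHm hgm
      _ ≤ ∫⁻ v in Ioi V₀, (ENNReal.ofReal (Real.exp S) * ENNReal.ofReal (Real.exp (-v))) := by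
          refine lintegral_mono_ae ((ae_restrict_iff' measurableSet_Ioi).2
            (Filter.Eventually.of_forall fun v hv => ?_))
          have hv' : V₀ < v := hv
          have hv0 : (0:ℝ) ≤ v := by linarith
          have hy := stmt8_young (mul_pos ht hl₁) hl₂ (by linarith : (0:ℝ) ≤ z + 1) hv0
          rw [← ENNReal.ofReal_mul (Real.exp_nonneg _), ← Real.exp_add,
            ← ENNReal.ofReal_mul (Real.exp_nonneg _), ← Real.exp_add]
          refine ENNReal.ofReal_le_ofReal (Real.exp_le_exp.2 ?_)
          rw [hSdef]
          nlinarith [hy]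
      _ = ENNReal.ofReal (Real.exp S) * ∫⁻ v in Ioi V₀, ENNReal.ofReal (Real.exp (-v)) :=
          lintegral_const_mul _ (Real.measurable_exp.comp measurable_neg).ennreal_ofReal
      _ ≤ ENNReal.ofReal (Real.exp S) * 1 := mul_le_mul_right hexpint _
      _ = ENNReal.ofReal (Real.exp S) := mul_one _
  have hsplit := lintegral_add_compl (fun v => ENNReal.ofReal (Real.exp (z * v)))
    (measurableSet_Iic (a := V₀)) (μ := μ)
  rw [compl_Iic] at hsplit
  refine ENNReal.toReal_le_of_le_ofReal (by positivity) ?_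
  rw [ENNReal.ofReal_add (Real.exp_nonneg _) (Real.exp_nonneg _), ← hsplit]
  exact add_le_add h1 h2

lemma stmt8_M_lower {l₁ l₂ : ℝ} (hl₁ : 0 < l₁) (hl₂ : 1 < l₂)
    {f : ℝ → ℝ} {μ : Measure ℝ} [IsProbabilityMeasure μ]
    (hdens : μ = volume.withDensity (fun v => ENNReal.ofReal (f v)))
    (hmgf : ∀ z : ℝ, Integrable (fun v => Real.exp (z * v)) μ)
    {t : ℝ} (ht : 0 < t) {V₀ : ℝ} (hV₀ : 1 ≤ V₀)
    (hlb : ∀ v, V₀ ≤ v → Real.exp (-(t * l₁ * v ^ l₂)) ≤ f v)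
    {z w : ℝ} (hz : 0 ≤ z) (hw : V₀ ≤ w) :
    Real.exp (z * w - t * l₁ * (w + 1) ^ l₂) ≤ ∫ v, Real.exp (z * v) ∂μ := by
  obtain ⟨hrepr, hfin⟩ := stmt8_integral_repr (z := z) (hmgf z)
  rw [hrepr]
  have hw0 : (0:ℝ) < w := lt_of_lt_of_le one_pos hV₀ |>.trans_le hw
  -- measure of the interval is at least the density lower bound
  have hμIcc : ENNReal.ofReal (Real.exp (-(t * l₁ * (w + 1) ^ l₂))) ≤ μ (Icc w (w + 1)) := by
    rw [hdens, withDensity_apply _ measurableSet_Icc]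
    calc ENNReal.ofReal (Real.exp (-(t * l₁ * (w + 1) ^ l₂)))
        = ∫⁻ _ in Icc w (w + 1), ENNReal.ofReal (Real.exp (-(t * l₁ * (w + 1) ^ l₂))) := by
          rw [setLIntegral_const, Real.volume_Icc, show w + 1 - w = 1 by ring,
            ENNReal.ofReal_one, mul_one]
      _ ≤ ∫⁻ v in Icc w (w + 1), ENNReal.ofReal (f v) := by
          refine lintegral_mono_ae ((ae_restrict_iff' measurableSet_Icc).2
            (Filter.Eventually.of_forall fun v hv => ?_))
          refine ENNReal.ofReal_le_ofReal (le_trans ?_ (hlb v (le_trans hw hv.1)))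
          refine Real.exp_le_exp.2 (neg_le_neg ?_)
          refine mul_le_mul_of_nonneg_left ?_ (mul_pos ht hl₁).le
          exact Real.rpow_le_rpow (by linarith [hv.1]) (by linarith [hv.2]) (by linarith)
  have key : ENNReal.ofReal (Real.exp (z * w - t * l₁ * (w + 1) ^ l₂))
      ≤ ∫⁻ v, ENNReal.ofReal (Real.exp (z * v)) ∂μ := by
    calc ENNReal.ofReal (Real.exp (z * w - t * l₁ * (w + 1) ^ l₂))
        = ENNReal.ofReal (Real.exp (z * w)) * ENNReal.ofReal (Real.exp (-(t * l₁ * (w + 1) ^ l₂))) := by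
          rw [← ENNReal.ofReal_mul (Real.exp_nonneg _), ← Real.exp_add]
          ring_nf
      _ ≤ ENNReal.ofReal (Real.exp (z * w)) * μ (Icc w (w + 1)) := mul_le_mul_right hμIcc _
      _ = ∫⁻ _ in Icc w (w + 1), ENNReal.ofReal (Real.exp (z * w)) ∂μ :=
          (setLIntegral_const _ _).symm
      _ ≤ ∫⁻ v in Icc w (w + 1), ENNReal.ofReal (Real.exp (z * v)) ∂μ := by
          refine lintegral_mono_ae ((ae_restrict_iff' measurableSet_Icc).2
            (Filter.Eventually.of_forall fun v hv => ENNReal.ofReal_le_ofReal ?_))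
          exact Real.exp_le_exp.2 (mul_le_mul_of_nonneg_left hv.1 hz)
      _ ≤ ∫⁻ v, ENNReal.ofReal (Real.exp (z * v)) ∂μ := setLIntegral_le_lintegral _ _
  have := ENNReal.toReal_mono hfin key
  rwa [ENNReal.toReal_ofReal (Real.exp_nonneg _)] at this

lemma stmt8_tail {l₁ l₂ : ℝ} (hl₁ : 0 < l₁) (hl₂ : 1 < l₂) {f : ℝ → ℝ} (hfnonneg : ∀ v, 0 ≤ f v)
    (htail : Tendsto (fun v => Real.log (f v) / (-(l₁ * v ^ l₂))) atTop (nhds 1))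
    {ε : ℝ} (hε : 0 < ε) (hε2 : ε ≤ 1 / 2) :
    ∃ V₀ : ℝ, 1 ≤ V₀ ∧ ∀ v, V₀ ≤ v →
      Real.exp (-((1 + ε) * l₁ * v ^ l₂)) ≤ f v ∧ f v ≤ Real.exp (-((1 - ε) * l₁ * v ^ l₂)) := by
  have h1 : ∀ᶠ v in atTop, |Real.log (f v) / (-(l₁ * v ^ l₂)) - 1| < ε := by
    have := Metric.tendsto_nhds.1 htail ε hε
    simpa [Real.dist_eq] using this
  have h2 : ∀ᶠ v in atTop, (1:ℝ) ≤ v := eventually_ge_atTop 1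
  obtain ⟨V₁, hV₁⟩ := eventually_atTop.1 (h1.and h2)
  refine ⟨max V₁ 1, le_max_right _ _, fun v hv => ?_⟩
  obtain ⟨habs, hv1⟩ := hV₁ v (le_trans (le_max_left _ _) hv)
  have hD : (0:ℝ) < l₁ * v ^ l₂ := mul_pos hl₁ (Real.rpow_pos_of_pos (by linarith) _)
  set T : ℝ := Real.log (f v) / (-(l₁ * v ^ l₂)) with hTdef
  have hT1 : 1 - ε < T := by
    rw [abs_sub_lt_iff] at habs; linarith [habs.2]
  have hT2 : T < 1 + ε := by
    rw [abs_sub_lt_iff] at habs; linarith [habs.1]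
  have hL : Real.log (f v) = T * (-(l₁ * v ^ l₂)) := by
    rw [hTdef, div_mul_cancel₀ _ (by linarith : -(l₁ * v ^ l₂) ≠ 0)]
  have hfv : 0 < f v := by
    rcases (hfnonneg v).lt_or_eq with h | h
    · exact h
    · exfalso
      rw [← h, Real.log_zero, zero_div] at hTdef
      linarith
  have hfe : f v = Real.exp (Real.log (f v)) := (Real.exp_log hfv).symm
  constructor
  · rw [hfe]
    refine Real.exp_le_exp.2 ?_
    rw [hL]
    nlinarith
  · rw [hfe]
    refine Real.exp_le_exp.2 ?_
    rw [hL]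
    nlinarith

private lemma div_le_div_of_nonneg_right' {a b c : ℝ} (hab : a ≤ b) (hc : 0 ≤ c) :
    a / c ≤ b / c := div_le_div_of_nonneg_right hab hc

/-- Kasahara-type Tauberian asymptotics: if `V` has density `f` on `(0,∞)` with
`log f(v) ∼ -l₁ v^(l₂)` (`l₁ > 0`, `l₂ > 1`), then
`log E[exp (z V)] ∼ (l₂-1) l₁ (z/(l₁ l₂))^(l₂/(l₂-1))` as `z → ∞`; in particular
`z ↦ log E[exp (z V)]` is regularly varying with index `l₂/(l₂-1)`. -/
theorem stmt_8 (l₁ l₂ : ℝ) (hl₁ : 0 < l₁) (hl₂ : 1 < l₂)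
    (f : ℝ → ℝ) (hfnonneg : ∀ v, 0 ≤ f v) (hfsupp : ∀ v ≤ (0:ℝ), f v = 0)
    (μ : Measure ℝ) [IsProbabilityMeasure μ]
    (hdens : μ = volume.withDensity (fun v => ENNReal.ofReal (f v)))
    (hmgf : ∀ z : ℝ, Integrable (fun v => Real.exp (z * v)) μ)
    (htail : Tendsto (fun v => Real.log (f v) / (-(l₁ * v ^ l₂))) atTop (nhds 1)) :
    Tendsto (fun z => Real.log (∫ v, Real.exp (z * v) ∂μ) /
        ((l₂ - 1) * l₁ * (z / (l₁ * l₂)) ^ (l₂ / (l₂ - 1)))) atTop (nhds 1) ∧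
    ∀ lam > (0:ℝ),
      Tendsto (fun z => Real.log (∫ v, Real.exp (lam * z * v) ∂μ) /
          Real.log (∫ v, Real.exp (z * v) ∂μ)) atTop
        (nhds (lam ^ (l₂ / (l₂ - 1)))) := by
  have hl₂0 : (0:ℝ) < l₂ := lt_trans one_pos hl₂
  have hs : (0:ℝ) < l₂ - 1 := by linarith
  have hA : (0:ℝ) < l₁ * l₂ := mul_pos hl₁ hl₂0
  have hq0 : (0:ℝ) < l₂ / (l₂ - 1) := div_pos hl₂0 hs
  have part1 : Tendsto (fun z => Real.log (∫ v, Real.exp (z * v) ∂μ) /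
      ((l₂ - 1) * l₁ * (z / (l₁ * l₂)) ^ (l₂ / (l₂ - 1)))) atTop (nhds 1) := by
    rw [Metric.tendsto_nhds]
    intro δ hδ
    have hcont : ContinuousAt (fun u : ℝ => u ^ (1 - l₂ / (l₂ - 1))) 1 :=
      Real.continuousAt_rpow_const 1 _ (Or.inl one_ne_zero)
    have hev : ∀ᶠ u in nhds (1:ℝ), |u ^ (1 - l₂ / (l₂ - 1)) - 1| < δ := by
      have h0 := hcont.tendsto
      rw [Real.one_rpow] at h0
      have h2 := Metric.tendsto_nhds.1 h0 δ hδ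
      simpa [Real.dist_eq] using h2
    obtain ⟨η, hη, hball⟩ := Metric.eventually_nhds_iff.1 hev
    set ε : ℝ := min (η / 2) (1 / 2) with hεdef
    have hε : 0 < ε := lt_min (by linarith) (by norm_num)
    have hε2 : ε ≤ 1 / 2 := min_le_right _ _
    have hεη : ε < η := lt_of_le_of_lt (min_le_left _ _) (by linarith)
    have hdm : dist (1 - ε) (1:ℝ) < η := by
      rw [Real.dist_eq, show (1 - ε) - 1 = -ε by ring, abs_neg, abs_of_pos hε]
      exact hεη
    have hdp : dist (1 + ε) (1:ℝ) < η := by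
      rw [Real.dist_eq, show (1 + ε) - 1 = ε by ring, abs_of_pos hε]
      exact hεη
    have hbm : (1 - ε) ^ (1 - l₂ / (l₂ - 1)) < 1 + δ := by
      have := hball hdm; rw [abs_sub_lt_iff] at this; linarith [this.1]
    have hbp : 1 - δ < (1 + ε) ^ (1 - l₂ / (l₂ - 1)) := by
      have := hball hdp; rw [abs_sub_lt_iff] at this; linarith [this.2]
    obtain ⟨V₀, hV₀1, hV₀⟩ := stmt8_tail hl₁ hl₂ hfnonneg htail hε hε2
    have htm : (0:ℝ) < 1 - ε := by linarith
    have htp : (0:ℝ) < 1 + ε := by linarith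
    have hU := stmt8_upper_limit hl₁ hl₂ htm (Real.log 2) V₀
    have hL := stmt8_lower_limit hl₁ hl₂ htp
    have hUe := hU.eventually_lt_const hbm
    have hLe := hL.eventually_const_lt hbp
    have hwtend : Tendsto (fun z : ℝ => (z / (((1 + ε) * l₁) * l₂)) ^ (1 / (l₂ - 1)))
        atTop atTop :=
      (tendsto_rpow_atTop (div_pos one_pos hs)).comp
        (tendsto_id.atTop_div_const (mul_pos (mul_pos htp hl₁) hl₂0))
    filter_upwards [hUe, hLe, eventually_gt_atTop (0:ℝ), hwtend.eventually_ge_atTop V₀]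
      with z hUz hLz hzpos hwz
    have hz0 : (0:ℝ) ≤ z := hzpos.le
    set w : ℝ := (z / (((1 + ε) * l₁) * l₂)) ^ (1 / (l₂ - 1)) with hwdef
    set den : ℝ := (l₂ - 1) * l₁ * (z / (l₁ * l₂)) ^ (l₂ / (l₂ - 1)) with hdendef
    have hden : 0 < den :=
      mul_pos (mul_pos hs hl₁) (Real.rpow_pos_of_pos (div_pos hzpos hA) _)
    set M : ℝ := ∫ v, Real.exp (z * v) ∂μ with hMdef
    have hMlow0 := stmt8_M_lower hl₁ hl₂ hdens hmgf htp hV₀1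
      (fun v hv => (hV₀ v hv).1) hz0 (le_refl V₀)
    have hMpos : 0 < M := lt_of_lt_of_le (Real.exp_pos _) hMlow0
    have hub := stmt8_M_upper hl₁ hl₂ hdens hmgf htm hV₀1
      (fun v hv => (hV₀ v hv).2) hz0
    set S : ℝ := (l₂ - 1) * ((1 - ε) * l₁) * ((z + 1) / (((1 - ε) * l₁) * l₂)) ^ (l₂ / (l₂ - 1))
      with hSdef
    have hS0 : 0 ≤ S :=
      mul_nonneg (mul_nonneg hs.le (mul_nonneg htm.le hl₁.le))
        (Real.rpow_nonneg (div_nonneg (by linarith) (mul_pos (mul_pos htm hl₁) hl₂0).le) _)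
    have hzV : 0 ≤ z * V₀ := mul_nonneg hz0 (by linarith)
    have hlogM_le : Real.log M ≤ Real.log 2 + z * V₀ + S := by
      have h3 : Real.exp (z * V₀) + Real.exp S ≤ 2 * Real.exp (z * V₀ + S) := by
        have e1 : Real.exp (z * V₀) ≤ Real.exp (z * V₀ + S) := Real.exp_le_exp.2 (by linarith)
        have e2 : Real.exp S ≤ Real.exp (z * V₀ + S) := Real.exp_le_exp.2 (by linarith)
        linarith
      calc Real.log M ≤ Real.log (2 * Real.exp (z * V₀ + S)) :=
            Real.log_le_log hMpos (by linarith [hub])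
        _ = Real.log 2 + z * V₀ + S := by
            rw [Real.log_mul two_ne_zero (Real.exp_ne_zero _), Real.log_exp]; ring
    have hup : Real.log M / den < 1 + δ :=
      lt_of_le_of_lt (div_le_div_of_nonneg_right' hlogM_le hden.le) hUz
    have hlow := stmt8_M_lower hl₁ hl₂ hdens hmgf htp hV₀1
      (fun v hv => (hV₀ v hv).1) hz0 hwz
    have hlog_ge : z * w - (1 + ε) * l₁ * (w + 1) ^ l₂ ≤ Real.log M :=
      (Real.le_log_iff_exp_le hMpos).2 hlow
    have hlowratio : 1 - δ < Real.log M / den :=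
      lt_of_lt_of_le hLz (div_le_div_of_nonneg_right' hlog_ge hden.le)
    rw [Real.dist_eq, abs_sub_lt_iff]
    constructor <;> [linarith [hup]; linarith [hlowratio]]
  refine ⟨part1, fun lam hlam => ?_⟩
  have hstend : Tendsto (fun z : ℝ => (l₂ - 1) * l₁ * (z / (l₁ * l₂)) ^ (l₂ / (l₂ - 1)))
      atTop atTop := by
    apply Tendsto.const_mul_atTop (mul_pos hs hl₁)
    exact (tendsto_rpow_atTop hq0).comp (tendsto_id.atTop_div_const hA)
  have h1 : Tendsto (fun z => Real.log (∫ v, Real.exp (lam * z * v) ∂μ) /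
      ((l₂ - 1) * l₁ * ((lam * z) / (l₁ * l₂)) ^ (l₂ / (l₂ - 1)))) atTop (nhds 1) := by
    have := part1.comp (Tendsto.const_mul_atTop hlam tendsto_id)
    simpa [Function.comp_def] using this
  have h3 : Tendsto (fun z => ((l₂ - 1) * l₁ * (z / (l₁ * l₂)) ^ (l₂ / (l₂ - 1))) /
      Real.log (∫ v, Real.exp (z * v) ∂μ)) atTop (nhds 1) := by
    have h0 := part1.inv₀ one_ne_zero
    rw [inv_one] at h0
    apply h0.congr
    intro z
    rw [inv_div]
  have hgpos : ∀ᶠ z in atTop, 0 < Real.log (∫ v, Real.exp (z * v) ∂μ) := by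
    filter_upwards [part1.eventually_const_lt (by norm_num : (1:ℝ)/2 < 1),
      hstend.eventually_gt_atTop 0] with z hz1 hz2
    have := (lt_div_iff₀ hz2).1 hz1
    nlinarith
  have hc : Tendsto (fun _ : ℝ => lam ^ (l₂ / (l₂ - 1))) atTop
      (nhds (lam ^ (l₂ / (l₂ - 1)))) := tendsto_const_nhds
  have hmain := (h1.mul hc).mul h3
  rw [one_mul, mul_one] at hmain
  apply hmain.congr'
  filter_upwards [hgpos, eventually_gt_atTop (0:ℝ)] with z hgz hz
  have hlamq : (0:ℝ) < lam ^ (l₂ / (l₂ - 1)) := Real.rpow_pos_of_pos hlam _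
  have hdenz : (0:ℝ) < (l₂ - 1) * l₁ * (z / (l₁ * l₂)) ^ (l₂ / (l₂ - 1)) :=
    mul_pos (mul_pos hs hl₁) (Real.rpow_pos_of_pos (div_pos hz hA) _)
  have hrel : (l₂ - 1) * l₁ * ((lam * z) / (l₁ * l₂)) ^ (l₂ / (l₂ - 1))
      = lam ^ (l₂ / (l₂ - 1)) * ((l₂ - 1) * l₁ * (z / (l₁ * l₂)) ^ (l₂ / (l₂ - 1))) := by
    rw [show (lam * z) / (l₁ * l₂) = lam * (z / (l₁ * l₂)) by ring,
      Real.mul_rpow hlam.le (div_nonneg hz.le hA.le)]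
    ring
  rw [hrel]
  field_simp
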